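/- In the free Lie algebra on x, y over a field of characteristic 0 with derivation δ(x)=0, δ(y)=x: if f = α[y,x,x,y,y] + β[y,x,y,y,x] (left-normed) satisfies δ(f)=0, then α = β = 0. -/

import Mathlib

set_option maxRecDepth 10000
set_option maxHeartbeats 2000000

open FreeLieAlgebra

attribute [local instance 100] LieRing.ofAssociativeRing

noncomputable def degFiveCw {K : Type*} [Field K] (w : FreeMonoid (Fin 2)) :
    MonoidAlgebra K (FreeMonoid (Fin 2)) →ₗ[K] K :=
  Finsupp.lapply w ∘ₗ (MonoidAlgebra.coeffLinearEquiv K).toLinearMap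

open scoped Classical in
lemma degFiveCw_single {K : Type*} [Field K] (u w : FreeMonoid (Fin 2)) (c : K) :
    degFiveCw w (MonoidAlgebra.single u c) = if u = w then c else 0 := by
  have h : degFiveCw (K := K) w (MonoidAlgebra.single u c) = (Finsupp.single u c) w := rfl
  rw [h, Finsupp.single_apply]

lemma degFiveOfListInj (l l' : List (Fin 2)) :
    FreeMonoid.ofList l = FreeMonoid.ofList l' ↔ l = l' := by
  constructor
  · intro h; exact FreeMonoid.toList_ofList l ▸ FreeMonoid.toList_ofList l' ▸ congrArg FreeMonoid.toList h
  · intro h; rw [h]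

theorem degree_five_constants_trivial {K : Type*} [Field K] [CharZero K]
    (δ : FreeLieAlgebra K (Fin 2) →ₗ[K] FreeLieAlgebra K (Fin 2))
    (hδ : ∀ a b : FreeLieAlgebra K (Fin 2), δ ⁅a, b⁆ = ⁅δ a, b⁆ + ⁅a, δ b⁆)
    (hx : δ (FreeLieAlgebra.of K (0 : Fin 2)) = 0)
    (hy : δ (FreeLieAlgebra.of K (1 : Fin 2)) = FreeLieAlgebra.of K (0 : Fin 2))
    (α β : K)
    (f : FreeLieAlgebra K (Fin 2))
    (hf : f = α • ⁅⁅⁅⁅FreeLieAlgebra.of K (1 : Fin 2), FreeLieAlgebra.of K (0 : Fin 2)⁆,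
        FreeLieAlgebra.of K (0 : Fin 2)⁆, FreeLieAlgebra.of K (1 : Fin 2)⁆, FreeLieAlgebra.of K (1 : Fin 2)⁆
      + β • ⁅⁅⁅⁅FreeLieAlgebra.of K (1 : Fin 2), FreeLieAlgebra.of K (0 : Fin 2)⁆,
        FreeLieAlgebra.of K (1 : Fin 2)⁆, FreeLieAlgebra.of K (1 : Fin 2)⁆, FreeLieAlgebra.of K (0 : Fin 2)⁆)
    (h : δ f = 0) :
    α = 0 ∧ β = 0 := by
  classical
  subst hf
  set x := FreeLieAlgebra.of K (0 : Fin 2) with hxdef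
  set y := FreeLieAlgebra.of K (1 : Fin 2) with hydef
  have h1 : δ ⁅y, x⁆ = 0 := by rw [hδ, hx, hy]; simp only [lie_self, lie_zero, add_zero]
  have h2 : δ ⁅⁅y, x⁆, x⁆ = 0 := by rw [hδ, h1, hx]; simp only [zero_lie, lie_zero, add_zero]
  have h3 : δ ⁅⁅⁅y, x⁆, x⁆, y⁆ = ⁅⁅⁅y, x⁆, x⁆, x⁆ := by
    rw [hδ, h2, hy]; simp only [zero_lie, zero_add]
  have h3' : δ ⁅⁅y, x⁆, y⁆ = ⁅⁅y, x⁆, x⁆ := by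
    rw [hδ, h1, hy]; simp only [zero_lie, zero_add]
  have h4' : δ ⁅⁅⁅y, x⁆, y⁆, y⁆ = ⁅⁅⁅y, x⁆, x⁆, y⁆ + ⁅⁅⁅y, x⁆, y⁆, x⁆ := by
    rw [hδ, h3', hy]
  have hA : δ ⁅⁅⁅⁅y, x⁆, x⁆, y⁆, y⁆ = ⁅⁅⁅⁅y, x⁆, x⁆, x⁆, y⁆ + ⁅⁅⁅⁅y, x⁆, x⁆, y⁆, x⁆ := by
    rw [hδ, h3, hy]
  have hB : δ ⁅⁅⁅⁅y, x⁆, y⁆, y⁆, x⁆ = ⁅⁅⁅⁅y, x⁆, x⁆, y⁆, x⁆ + ⁅⁅⁅⁅y, x⁆, y⁆, x⁆, x⁆ := by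
    rw [hδ, h4', hx, add_lie]; simp only [lie_zero, add_zero]
  rw [map_add, map_smul, map_smul, hA, hB] at h
  -- map into the monoid algebra on the free monoid (with commutator bracket)
  let g : Fin 2 → MonoidAlgebra K (FreeMonoid (Fin 2)) :=
    fun i => MonoidAlgebra.single (FreeMonoid.of i) 1
  let φ : FreeLieAlgebra K (Fin 2) →ₗ⁅K⁆ MonoidAlgebra K (FreeMonoid (Fin 2)) :=
    FreeLieAlgebra.lift K g
  have h0 := congrArg φ h
  simp only [φ, hxdef, hydef, map_add, map_smul, LieHom.map_lie, lift_of_apply,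
    map_zero, Ring.lie_def, g] at h0
  simp only [sub_mul, mul_sub, MonoidAlgebra.single_mul_single, one_mul,
    ← FreeMonoid.ofList_singleton, ← FreeMonoid.ofList_append,
    List.singleton_append, List.cons_append, List.nil_append] at h0
  have h0' := congrArg (degFiveCw (K := K) (FreeMonoid.ofList [0,1,0,0,1])) h0
  have h0'' := congrArg (degFiveCw (K := K) (FreeMonoid.ofList [0,0,0,1,1])) h0
  simp (config := { decide := true }) only [map_add, map_sub, map_smul, map_zero,
    degFiveCw_single, degFiveOfListInj, smul_eq_mul, ite_true, ite_false,
    mul_zero, mul_one, sub_zero, zero_sub, sub_self,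
    add_zero, zero_add, neg_zero, mul_neg, neg_neg] at h0' h0''
  ring_nf at h0' h0''
  have hα : α = 0 := by
    have h3 : (3 : K) ≠ 0 := by norm_num
    have := neg_eq_zero.mp h0'
    rcases mul_eq_zero.mp this with h' | h'
    · exact h'
    · exact absurd h' h3
  refine ⟨hα, ?_⟩
  have h2 : (2 : K) ≠ 0 := by norm_num
  rw [hα] at h0''
  simp only [zero_mul, neg_zero, zero_sub, neg_eq_zero] at h0''
  rcases mul_eq_zero.mp h0'' with h' | h'
  · exact h'
  · exact absurd h' h2
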